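/- Let X₁,…,Xₙ be real numbers with sample mean X̄ₙ and sample variance Sₙ² > 0, and define F̂ₙ(s) = n⁻¹ Σⱼ (Xⱼ − X̄ₙ)/Sₙ² · (Xⱼ − s) · 1{Xⱼ ≤ s}. Then F̂ₙ is a continuous, nondecreasing function on ℝ with limit 0 at -∞ and 1 at +∞, i.e., F̂ₙ is a continuous distribution function. -/

import Mathlib

open MeasureTheory Finset Filter

theorem stmt_18 (n : ℕ) (hn : 0 < n) (X : Fin n → ℝ)
    (Xbar S2 : ℝ) (hXbar : Xbar = (∑ j, X j) / n)
    (hS2 : S2 = (∑ j, (X j - Xbar) ^ 2) / n) (hS2pos : 0 < S2)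
    (Fhat : ℝ → ℝ)
    (hF : ∀ s, Fhat s
      = (1 / n) * ∑ j, (X j - Xbar) / S2 * (X j - s) * (if X j ≤ s then 1 else 0)) :
    Continuous Fhat ∧ Monotone Fhat ∧
      Tendsto Fhat atBot (nhds 0) ∧ Tendsto Fhat atTop (nhds 1) := by
  have hn' : (n : ℝ) ≠ 0 := Nat.cast_ne_zero.mpr hn.ne'
  have hnpos : (0:ℝ) < n := Nat.cast_pos.mpr hn
  have hS2ne : S2 ≠ 0 := hS2pos.ne'
  have hne : (Finset.univ : Finset (Fin n)).Nonempty := univ_nonempty_iff.mpr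
    ⟨⟨0, hn⟩⟩
  have hsum0 : ∑ j, (X j - Xbar) = 0 := by
    rw [Finset.sum_sub_distrib, Finset.sum_const, card_univ, Fintype.card_fin, hXbar]
    rw [nsmul_eq_mul, mul_div_cancel₀ _ hn', sub_self]
  have hsumS : ∑ j, (X j - Xbar) * X j = n * S2 := by
    have h1 : ∑ j, (X j - Xbar) * X j = ∑ j, ((X j - Xbar) ^ 2 + (X j - Xbar) * Xbar) := by
      apply Finset.sum_congr rfl; intro j _; ring
    rw [h1, Finset.sum_add_distrib, ← Finset.sum_mul, hsum0, zero_mul, add_zero, hS2]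
    field_simp
  refine ⟨?_, ?_, ?_, ?_⟩
  · -- Continuity
    have hrepr : Fhat = fun s => (1 / n) * ∑ j, (X j - Xbar) / S2 * min (X j - s) 0 := by
      funext s
      rw [hF s]
      congr 1
      apply Finset.sum_congr rfl
      intro j _
      rcases le_or_gt (X j) s with h | h
      · rw [if_pos h, mul_one, min_eq_left (by linarith)]
      · rw [if_neg (not_le.mpr h), mul_zero, min_eq_right (by linarith), mul_zero]
    rw [hrepr]
    exact continuous_const.mul (continuous_finset_sum _ fun j _ =>
      continuous_const.mul ((continuous_const.sub continuous_id).min continuous_const))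
  · -- Monotone
    intro s t hst
    set L : Fin n → ℝ := fun j => max 0 (t - max s (X j)) with hL
    have key : ∀ j, (X j - Xbar) / S2 * (X j - t) * (if X j ≤ t then 1 else 0)
        - (X j - Xbar) / S2 * (X j - s) * (if X j ≤ s then 1 else 0)
        = (Xbar - X j) * L j / S2 := by
      intro j
      simp only [hL]
      rcases le_or_gt (X j) s with h1 | h1
      · rw [if_pos (h1.trans hst), if_pos h1, max_eq_left h1,
          max_eq_right (by linarith : (0:ℝ) ≤ t - s)]
        ring
      · rcases le_or_gt (X j) t with h2 | h2
        · rw [if_pos h2, if_neg (not_le.mpr h1), max_eq_right h1.le,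
            max_eq_right (by linarith : (0:ℝ) ≤ t - X j)]
          ring
        · rw [if_neg (not_le.mpr h1), if_neg (not_le.mpr h2), max_eq_right h1.le,
            max_eq_left (by linarith : t - X j ≤ 0)]
          ring
    have hanti : Antivary X L := by
      intro i j hLij
      by_contra hx
      push_neg at hx
      have : L j ≤ L i := by
        simp only [hL]
        apply max_le_max le_rfl
        apply sub_le_sub le_rfl
        exact max_le_max le_rfl hx.le
      linarith
    have hcheb := hanti.card_mul_sum_le_sum_mul_sum
    rw [Fintype.card_fin] at hcheb
    have hXsum : ∑ i, X i = n * Xbar := by rw [hXbar]; field_simp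
    have hsumpos : 0 ≤ ∑ j, (Xbar - X j) * L j := by
      have expand : ∑ j, (Xbar - X j) * L j = Xbar * (∑ j, L j) - ∑ j, X j * L j := by
        rw [Finset.mul_sum, ← Finset.sum_sub_distrib]
        apply Finset.sum_congr rfl
        intro j _; ring
      rw [expand]
      have h2 : (n:ℝ) * ∑ j, X j * L j ≤ (n * Xbar) * ∑ j, L j := by
        rw [← hXsum]; exact hcheb
      nlinarith
    have hdiff : Fhat t - Fhat s = (1 / n) * ∑ j, (Xbar - X j) * L j / S2 := by
      rw [hF t, hF s, ← mul_sub, ← Finset.sum_sub_distrib]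
      congr 1
      exact Finset.sum_congr rfl fun j _ => key j
    have : 0 ≤ Fhat t - Fhat s := by
      rw [hdiff, ← Finset.sum_div]
      positivity
    linarith
  · -- atBot
    have hev : ∀ᶠ s in atBot, Fhat s = 0 := by
      filter_upwards [eventually_lt_atBot (Finset.univ.inf' hne X)] with s hs
      rw [hF s]
      have : ∀ j ∈ Finset.univ, (X j - Xbar) / S2 * (X j - s) * (if X j ≤ s then 1 else 0) = 0 := by
        intro j _
        rw [if_neg (by
          push_neg
          exact lt_of_lt_of_le hs (Finset.inf'_le _ (mem_univ j))), mul_zero]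
      rw [Finset.sum_congr rfl this, Finset.sum_const, smul_zero, mul_zero]
    exact Tendsto.congr' (by filter_upwards [hev] with s h using h.symm) tendsto_const_nhds
  · -- atTop
    have hev : ∀ᶠ s in atTop, Fhat s = 1 := by
      filter_upwards [eventually_ge_atTop (Finset.univ.sup' hne X)] with s hs
      rw [hF s]
      have : ∀ j ∈ Finset.univ, (X j - Xbar) / S2 * (X j - s) * (if X j ≤ s then 1 else 0)
          = ((X j - Xbar) * X j - (X j - Xbar) * s) / S2 := by
        intro j _
        rw [if_pos ((Finset.le_sup' X (mem_univ j)).trans hs)]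
        ring
      rw [Finset.sum_congr rfl this, ← Finset.sum_div, Finset.sum_sub_distrib,
        ← Finset.sum_mul, hsum0, hsumS, zero_mul, sub_zero]
      field_simp
    exact Tendsto.congr' (by filter_upwards [hev] with s h using h.symm) tendsto_const_nhds
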